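/- arXiv:1812.09377 — 3 statements merged into one kernel-verified Lean document; each statement's English description precedes it below -/
import Mathlib

section
/- Let j and n be positive integers with j ≤ n. For every permutation w ∈ 𝔖_n, the alternating sum over all compositions μ of j of (−1)^{ℓ(μ)} ζ^μ(w) equals the alternating sum over all partitions μ of j of (−1)^{ℓ(μ)} η^μ(w); that is, Σ_{μ ⊨ j} (−1)^{ℓ(μ)} ζ^μ(w) = Σ_{μ ⊢ j} (−1)^{ℓ(μ)} η^μ(w). -/
open scoped Classical

/-- A finset `s ⊆ Fin n` is a cycle (orbit) of the permutation `w`;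
fixed points count as cycles of length 1. -/
def IsCycleSetOf {n : ℕ} (w : Equiv.Perm (Fin n)) (s : Finset (Fin n)) : Prop :=
  ∃ x : Fin n, ∀ y : Fin n, y ∈ s ↔ w.SameCycle x y

/-- The finset of cycles (orbits) of `w`, fixed points included as 1-cycles. -/
noncomputable def cyclesOf {n : ℕ} (w : Equiv.Perm (Fin n)) : Finset (Finset (Fin n)) :=
  Finset.univ.filter (IsCycleSetOf w)

/-- `cycCount w i` is `c_i(w)`, the number of cycles of `w` of length `i`. -/
noncomputable def cycCount {n : ℕ} (w : Equiv.Perm (Fin n)) (i : ℕ) : ℕ :=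
  ((cyclesOf w).filter fun s => s.card = i).card

/-- The cycle type of `w` as a multiset, fixed points included as parts equal to 1. -/
noncomputable def fullCycleType {n : ℕ} (w : Equiv.Perm (Fin n)) : Multiset ℕ :=
  (cyclesOf w).val.map Finset.card

/-- `zeta w lam` is `ζ^lam(w)`, the number of ordered brick tilings of the
composition/partition `lam` (given as a list of parts) by `w`:  tuples
`(S_1, …, S_r)` of pairwise disjoint sets of cycles of `w` such that the lengths of the
cycles in `S_j` sum to `lam_j`. -/
noncomputable def zeta {n : ℕ} (w : Equiv.Perm (Fin n)) (lam : List ℕ) : ℕ :=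
  Nat.card {L : Fin lam.length → Finset (Finset (Fin n)) //
    (∀ i, ∀ c ∈ L i, c ∈ cyclesOf w) ∧
    (∀ i j, i ≠ j → Disjoint (L i) (L j)) ∧
    ∀ i, (L i).sum Finset.card = lam.get i}

/-- `xi w mu` is `ξ^mu(w)`, the number of unordered brick tilings of `mu`
(a multiset of parts) by `w`: sets of pairwise disjoint nonempty sets of cycles of `w`
whose multiset of total lengths is `mu`. -/
noncomputable def xi {n : ℕ} (w : Equiv.Perm (Fin n)) (mu : Multiset ℕ) : ℕ :=
  Nat.card {T : Finset (Finset (Finset (Fin n))) //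
    (∀ S ∈ T, ∀ c ∈ S, c ∈ cyclesOf w) ∧
    (∀ S ∈ T, S.Nonempty) ∧
    ((T : Set (Finset (Finset (Fin n)))).Pairwise Disjoint) ∧
    T.val.map (fun S => S.sum Finset.card) = mu}

/-- `eta w mu` is `η^mu(w)`, the number of unordered crackless brick tilings of `mu`
by `w`: sets of distinct cycles of `w` whose multiset of lengths is `mu`. -/
noncomputable def eta {n : ℕ} (w : Equiv.Perm (Fin n)) (mu : Multiset ℕ) : ℕ :=
  Nat.card {T : Finset (Finset (Fin n)) //
    (∀ c ∈ T, c ∈ cyclesOf w) ∧ T.val.map Finset.card = mu}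

/-- The irreducible character value `χ^lam(w)` defined via Frobenius's formula:
the coefficient of `x_1^{lam_1+ℓ-1} ⋯ x_ℓ^{lam_ℓ}` in
`∏_{i<j}(x_i - x_j) · ∏_{cycles c of w} (x_1^{|c|} + ⋯ + x_ℓ^{|c|})`. -/
noncomputable def chiFrob {n : ℕ} (w : Equiv.Perm (Fin n)) (lam : List ℕ) : ℤ :=
  MvPolynomial.coeff
    (Finsupp.equivFunOnFinite.symm fun i : Fin lam.length =>
      lam.get i + (lam.length - 1 - (i : ℕ)))
    ((∏ p ∈ Finset.univ.filter (fun p : Fin lam.length × Fin lam.length => p.1 < p.2),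
        (MvPolynomial.X p.1 - MvPolynomial.X p.2)) *
      ∏ c ∈ cyclesOf w, ∑ i : Fin lam.length,
        (MvPolynomial.X i : MvPolynomial (Fin lam.length) ℤ) ^ c.card)

open Finset

section OSP

variable {α : Type*} [Fintype α] [DecidableEq α]

/-- Number of ordered set partitions of `C` into `r` nonempty blocks. -/
noncomputable def ospCount (r : ℕ) (C : Finset α) : ℕ :=
  ((univ : Finset (Fin r → Finset α)).filter
    (fun L => (∀ i, (L i).Nonempty) ∧ (∀ i j, i ≠ j → Disjoint (L i) (L j)) ∧
      univ.biUnion L = C)).card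

lemma ospCount_zero (C : Finset α) : ospCount 0 C = if C = ∅ then 1 else 0 := by
  classical
  unfold ospCount
  by_cases h : C = ∅
  · subst h
    rw [if_pos rfl]
    have : ((univ : Finset (Fin 0 → Finset α)).filter
      (fun L => (∀ i, (L i).Nonempty) ∧ (∀ i j, i ≠ j → Disjoint (L i) (L j)) ∧
        univ.biUnion L = ∅)) = univ := by
      apply Finset.filter_true_of_mem
      intro L _
      refine ⟨fun i => i.elim0, fun i => i.elim0, ?_⟩
      simp
    rw [this]
    simp
  · rw [if_neg h]
    rw [Finset.card_eq_zero, Finset.filter_eq_empty_iff]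
    intro L _
    intro hL
    exact h (by simpa using hL.2.2.symm)

lemma ospCount_eq_zero_of_lt {r : ℕ} {C : Finset α} (h : C.card < r) : ospCount r C = 0 := by
  classical
  rw [ospCount, Finset.card_eq_zero, Finset.filter_eq_empty_iff]
  rintro L - ⟨h1, h2, h3⟩
  have hcard : C.card = ∑ i : Fin r, (L i).card := by
    rw [← h3]
    exact Finset.card_biUnion (fun i _ j _ hij => h2 i j hij)
  have : (univ : Finset (Fin r)).card • 1 ≤ ∑ i : Fin r, (L i).card :=
    Finset.card_nsmul_le_sum _ _ _ (fun i _ => Finset.card_pos.2 (h1 i))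
  simp only [Finset.card_univ, Fintype.card_fin, smul_eq_mul, mul_one] at this
  omega


omit [Fintype α] in
lemma biUnion_succ {r : ℕ} (L : Fin (r+1) → Finset α) :
    (univ : Finset (Fin (r+1))).biUnion L = L 0 ∪ (univ : Finset (Fin r)).biUnion (Fin.tail L) := by
  ext x
  simp only [Finset.mem_biUnion, Finset.mem_union, Finset.mem_univ, true_and]
  constructor
  · rintro ⟨i, hi⟩
    rcases Fin.eq_zero_or_eq_succ i with h | ⟨k, rfl⟩
    · exact Or.inl (h ▸ hi)
    · exact Or.inr ⟨k, hi⟩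
  · rintro (h | ⟨k, hk⟩)
    · exact ⟨0, h⟩
    · exact ⟨k.succ, hk⟩

lemma ospCount_succ (r : ℕ) (C : Finset α) :
    ospCount (r+1) C = ∑ S ∈ C.powerset.filter Finset.Nonempty, ospCount r (C \ S) := by
  classical
  rw [ospCount]
  rw [Finset.card_eq_sum_card_fiberwise (f := fun L => L 0)
    (t := C.powerset.filter Finset.Nonempty) ?_]
  · apply Finset.sum_congr rfl
    intro S hS
    rw [Finset.mem_filter, Finset.mem_powerset] at hS
    rw [Finset.filter_filter, ospCount]
    refine Finset.card_bij' (fun L _ => Fin.tail L) (fun M _ => Fin.cons S M) ?hi ?hj ?left_inv ?right_inv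
    case hi =>
      rintro L hL
      obtain ⟨⟨h1, h2, h3⟩, h0⟩ := (Finset.mem_filter.1 hL).2
      refine Finset.mem_filter.2 ⟨Finset.mem_univ _,
        fun i => h1 _, fun i j hij => h2 _ _ (by simpa using hij), ?_⟩
      have hbu := biUnion_succ L
      rw [h3, h0] at hbu
      have hd : ∀ x ∈ (univ : Finset (Fin r)).biUnion (Fin.tail L), x ∉ S := by
        intro x hx hxS
        rw [Finset.mem_biUnion] at hx
        obtain ⟨i, -, hxi⟩ := hx
        exact Finset.disjoint_left.1 (h2 0 i.succ (Fin.succ_ne_zero i).symm) (h0.symm ▸ hxS) hxi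
      ext x
      simp only [Finset.mem_sdiff]
      constructor
      · intro hx
        exact ⟨hbu ▸ Finset.mem_union_right _ hx, hd x hx⟩
      · rintro ⟨hxC, hxS⟩
        rcases Finset.mem_union.1 (hbu ▸ hxC) with h | h
        · exact absurd h hxS
        · exact h
    case hj =>
      rintro M hM
      obtain ⟨h1, h2, h3⟩ := (Finset.mem_filter.1 hM).2
      refine Finset.mem_filter.2 ⟨Finset.mem_univ _, ⟨?_, ?_, ?_⟩, by simp⟩
      · intro i
        rcases Fin.eq_zero_or_eq_succ i with h | ⟨k, rfl⟩
        · subst h; simpa using hS.2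
        · simpa using h1 k
      · have hMC : ∀ i, M i ⊆ C \ S := fun i =>
          h3 ▸ Finset.subset_biUnion_of_mem M (Finset.mem_univ i)
        intro i j hij
        rcases Fin.eq_zero_or_eq_succ i with h | ⟨k, rfl⟩ <;>
          rcases Fin.eq_zero_or_eq_succ j with h' | ⟨k', rfl⟩
        · exact absurd (h.trans h'.symm) hij
        · subst h
          simp only [Fin.cons_zero, Fin.cons_succ]
          exact (Disjoint.mono_left (hMC k') Finset.sdiff_disjoint).symm
        · subst h'
          simp only [Fin.cons_zero, Fin.cons_succ]
          exact Disjoint.mono_left (hMC k) Finset.sdiff_disjoint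
        · simp only [Fin.cons_succ]
          exact h2 k k' (fun h => hij (by rw [h]))
      · rw [biUnion_succ]
        simp only [Fin.cons_zero]
        have ht : Fin.tail (Fin.cons S M : Fin (r+1) → Finset α) = M := rfl
        rw [ht, h3, Finset.union_sdiff_of_subset hS.1]
    case left_inv =>
      intro L hL
      have h0 : L 0 = S := (Finset.mem_filter.1 hL).2.2
      show Fin.cons S (Fin.tail L) = L
      funext i
      rcases Fin.eq_zero_or_eq_succ i with h | ⟨k, rfl⟩
      · subst h; simpa using h0.symm
      · simp [Fin.tail]
    case right_inv =>
      intro M _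
      rfl
  · intro L hL
    obtain ⟨h1, h2, h3⟩ := (Finset.mem_filter.1 hL).2
    rw [Finset.mem_coe, Finset.mem_filter, Finset.mem_powerset]
    exact ⟨h3 ▸ Finset.subset_biUnion_of_mem L (Finset.mem_univ 0), h1 0⟩


lemma osp_core : ∀ (m : ℕ) (C : Finset α), C.card ≤ m →
    ∑ r ∈ Finset.range (m + 1), (-1 : ℤ) ^ r * ospCount r C = (-1) ^ C.card := by
  intro m
  induction m with
  | zero =>
    intro C hC
    have hCe : C = ∅ := Finset.card_eq_zero.1 (Nat.le_zero.1 hC)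
    subst hCe
    simp [ospCount_zero]
  | succ m ih =>
    intro C hC
    rw [Finset.sum_range_succ']
    simp only [pow_succ, pow_zero, one_mul]
    by_cases hCe : C = ∅
    · subst hCe
      have hz : ∀ r ∈ Finset.range (m+1), (-1:ℤ) ^ r * (-1) * ospCount (r+1) (∅ : Finset α) = 0 := by
        intro r _
        rw [ospCount_eq_zero_of_lt (by simp)]
        ring
      rw [Finset.sum_congr rfl hz]
      simp [ospCount_zero]
    · rw [ospCount_zero, if_neg hCe]
      have step : ∀ r ∈ Finset.range (m+1),
          (-1:ℤ) ^ r * (-1) * ospCount (r+1) C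
            = -∑ S ∈ C.powerset.filter Finset.Nonempty, (-1:ℤ) ^ r * ospCount r (C \ S) := by
        intro r _
        rw [ospCount_succ]
        push_cast
        rw [Finset.mul_sum, ← Finset.sum_neg_distrib]
        exact Finset.sum_congr rfl (fun S _ => by ring)
      rw [Nat.cast_zero, add_zero, Finset.sum_congr rfl step, Finset.sum_neg_distrib, Finset.sum_comm]
      have inner : ∀ S ∈ C.powerset.filter Finset.Nonempty,
          ∑ r ∈ Finset.range (m+1), (-1:ℤ) ^ r * ospCount r (C \ S)
            = (-1) ^ (C \ S).card := by
        intro S hS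
        rw [Finset.mem_filter, Finset.mem_powerset] at hS
        have hcard : (C \ S).card ≤ m := by
          have h1 : S.card ≤ C.card := Finset.card_le_card hS.1
          have h2 : 0 < S.card := Finset.card_pos.2 hS.2
          have h3 : (C \ S).card = C.card - S.card := Finset.card_sdiff_of_subset hS.1
          omega
        exact ih (C \ S) hcard
      rw [Finset.sum_congr rfl inner]
      have sgn : ∀ S ∈ C.powerset.filter Finset.Nonempty,
          ((-1 : ℤ)) ^ (C \ S).card = (-1) ^ C.card * (-1) ^ S.card := by
        intro S hS
        rw [Finset.mem_filter, Finset.mem_powerset] at hS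
        have : (C \ S).card + S.card = C.card := Finset.card_sdiff_add_card_eq_card hS.1
        rw [← this, pow_add, mul_assoc, ← pow_add]
        have : Even (S.card + S.card) := Even.add_self _
        rw [this.neg_one_pow, mul_one]
      rw [Finset.sum_congr rfl sgn, ← Finset.mul_sum]
      have : ∑ S ∈ C.powerset.filter Finset.Nonempty, ((-1:ℤ)) ^ S.card = -1 := by
        have h := Finset.sum_filter_add_sum_filter_not C.powerset Finset.Nonempty
          (fun S => ((-1:ℤ)) ^ S.card)
        have h2 : ∑ S ∈ C.powerset.filter (fun S => ¬ S.Nonempty), ((-1:ℤ)) ^ S.card = 1 := by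
          have : C.powerset.filter (fun S => ¬ S.Nonempty) = {∅} := by
            ext S
            simp only [Finset.mem_filter, Finset.mem_powerset,
              Finset.not_nonempty_iff_eq_empty, Finset.mem_singleton]
            exact ⟨fun h => h.2, fun h => by subst h; exact ⟨Finset.empty_subset _, rfl⟩⟩
          rw [this]
          simp
        rw [Finset.sum_powerset_neg_one_pow_card, if_neg hCe] at h
        linarith
      rw [this]
      ring


end OSP

section Glue

variable {n : ℕ} (w : Equiv.Perm (Fin n))

lemma card_pos_of_mem_cyclesOf {c : Finset (Fin n)} (hc : c ∈ cyclesOf w) : 0 < c.card := by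
  rw [cyclesOf, Finset.mem_filter] at hc
  obtain ⟨-, x, hx⟩ := hc
  exact Finset.card_pos.2 ⟨x, (hx x).2 (Equiv.Perm.SameCycle.refl w x)⟩

lemma natCard_subtype {β : Type*} [Fintype β] (p : β → Prop) :
    Nat.card {x // p x} = (univ.filter p).card := by
  classical
  rw [Nat.card_eq_fintype_card, Fintype.card_subtype]

/-- the collection of sets of cycles of total length `j` -/
noncomputable def Wset (j : ℕ) : Finset (Finset (Finset (Fin n))) :=
  (cyclesOf w).powerset.filter (fun C => C.sum Finset.card = j)

lemma wt_pos_of_nonempty {j : ℕ} {C : Finset (Finset (Fin n))} (hC : C ∈ Wset w j)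
    {S : Finset (Finset (Fin n))} (hSC : S ⊆ C) (hS : S.Nonempty) : 0 < S.sum Finset.card := by
  rw [Wset, Finset.mem_filter, Finset.mem_powerset] at hC
  exact Finset.sum_pos (fun c hc => card_pos_of_mem_cyclesOf w (hC.1 (hSC hc))) hS

noncomputable def Zcount (j : ℕ) (μ : Composition j) (C : Finset (Finset (Fin n))) : ℕ :=
  ((univ : Finset (Fin μ.blocks.length → Finset (Finset (Fin n)))).filter
    (fun L => ((∀ i, ∀ c ∈ L i, c ∈ cyclesOf w) ∧
      (∀ i k, i ≠ k → Disjoint (L i) (L k)) ∧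
      ∀ i, (L i).sum Finset.card = μ.blocks.get i) ∧ univ.biUnion L = C)).card

lemma list_sum_eq_sum_get {l : List ℕ} : ∑ i : Fin l.length, l.get i = l.sum := by
  conv_rhs => rw [← List.ofFn_get l]
  rw [List.sum_ofFn]

lemma zeta_eq_sum (j : ℕ) (μ : Composition j) :
    zeta w μ.blocks = ∑ C ∈ Wset w j, Zcount w j μ C := by
  classical
  rw [zeta, natCard_subtype]
  rw [Finset.card_eq_sum_card_fiberwise (f := fun L => univ.biUnion L) (t := Wset w j) ?_]
  · apply Finset.sum_congr rfl
    intro C _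
    rw [Finset.filter_filter, Zcount]
    congr 1
    ext x
    simp only [Finset.mem_filter]
  · intro L hL
    simp only [Finset.mem_coe, Finset.mem_filter] at hL
    obtain ⟨-, h1, h2, h3⟩ := hL
    rw [Finset.mem_coe, Wset, Finset.mem_filter, Finset.mem_powerset]
    constructor
    · intro c hc
      obtain ⟨i, -, hci⟩ := Finset.mem_biUnion.1 hc
      exact h1 i c hci
    · rw [Finset.sum_biUnion (fun i _ k _ hik => h2 i k hik)]
      calc ∑ i, (L i).sum Finset.card = ∑ i, μ.blocks.get i := by
            exact Finset.sum_congr rfl (fun i _ => h3 i)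
        _ = μ.blocks.sum := list_sum_eq_sum_get
        _ = j := μ.blocks_sum

noncomputable def compOf (j : ℕ) {r : ℕ} (L : Fin r → Finset (Finset (Fin n))) : Composition j :=
  if h : (∀ i ∈ List.ofFn (fun i => (L i).sum Finset.card), 0 < i) ∧
      (List.ofFn (fun i => (L i).sum Finset.card)).sum = j
  then ⟨List.ofFn (fun i => (L i).sum Finset.card), fun hi => h.1 _ hi, h.2⟩
  else Composition.ones j

lemma Zsum (j : ℕ) {C : Finset (Finset (Fin n))} (hC : C ∈ Wset w j) (r : ℕ) :
    ospCount r C = ∑ μ ∈ (univ : Finset (Composition j)).filter (fun μ => μ.length = r),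
      Zcount w j μ C := by
  classical
  have hCsub : C ⊆ cyclesOf w := by
    rw [Wset, Finset.mem_filter, Finset.mem_powerset] at hC
    exact hC.1
  have hCsum : C.sum Finset.card = j := by
    rw [Wset, Finset.mem_filter] at hC
    exact hC.2
  rw [ospCount]
  rw [Finset.card_eq_sum_card_fiberwise (f := fun L => compOf j L)
    (t := (univ : Finset (Composition j)).filter (fun μ => μ.length = r)) ?_]
  · apply Finset.sum_congr rfl
    intro μ hμ
    have hμr : μ.blocks.length = r := (Finset.mem_filter.1 hμ).2
    rw [Zcount]
    refine Finset.card_bij' (fun L _ => fun k => L (Fin.cast hμr k))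
      (fun M _ => fun k => M (Fin.cast hμr.symm k)) ?hi ?hj ?li ?ri
    case hi =>
      intro L hL
      simp only [Finset.mem_filter] at hL
      obtain ⟨⟨-, h1, h2, h3⟩, hcomp⟩ := hL
      have hcond : (∀ i ∈ List.ofFn (fun i => (L i).sum Finset.card), 0 < i) ∧
          (List.ofFn (fun i => (L i).sum Finset.card)).sum = j := by
        constructor
        · intro i hi
          rw [List.mem_ofFn] at hi
          obtain ⟨k, rfl⟩ := hi
          exact wt_pos_of_nonempty w hC
            (h3 ▸ Finset.subset_biUnion_of_mem L (Finset.mem_univ k)) (h1 k)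
        · rw [List.sum_ofFn, ← Finset.sum_biUnion (fun i _ k _ hik => h2 i k hik), h3, hCsum]
      subst hcomp
      have hblocks : (compOf j L).blocks = List.ofFn (fun i => (L i).sum Finset.card) := by
        rw [compOf, dif_pos hcond]
      simp only [Finset.mem_filter]
      refine ⟨Finset.mem_univ _, ⟨?_, ?_, ?_⟩, ?_⟩
      · intro i c hc
        exact hCsub ((h3 ▸ Finset.subset_biUnion_of_mem L (Finset.mem_univ _)) hc)
      · intro i k hik
        exact h2 _ _ (fun h => hik (Fin.cast_injective hμr h))
      · intro i
        rw [List.get_of_eq hblocks, List.get_ofFn]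
        rfl
      · ext c
        rw [← h3]
        simp only [Finset.mem_biUnion, Finset.mem_univ, true_and]
        constructor
        · rintro ⟨i, hi⟩; exact ⟨Fin.cast hμr i, hi⟩
        · rintro ⟨i, hi⟩; exact ⟨Fin.cast hμr.symm i, by simpa using hi⟩
    case hj =>
      intro M hM
      simp only [Finset.mem_filter] at hM
      obtain ⟨-, ⟨hq1, hq2, hq3⟩, hbu⟩ := hM
      have hwt : ∀ k, 0 < (M k).sum Finset.card := by
        intro k
        rw [hq3 k]
        exact μ.blocks_pos (List.get_mem μ.blocks k)
      have hnonempty : ∀ k : Fin r, (M (Fin.cast hμr.symm k)).Nonempty := by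
        intro k
        rcases Finset.eq_empty_or_nonempty (M (Fin.cast hμr.symm k)) with h | h
        · exfalso
          have := hwt (Fin.cast hμr.symm k)
          rw [h] at this
          simp at this
        · exact h
      have hsum : ∑ k : Fin r, (M (Fin.cast hμr.symm k)).sum Finset.card = j := by
        have he := Fintype.sum_equiv (finCongr hμr.symm)
          (fun k : Fin r => (M (Fin.cast hμr.symm k)).sum Finset.card)
          (fun k' => (M k').sum Finset.card) (fun k => rfl)
        rw [he, ← Finset.sum_biUnion (fun i _ k _ hik => hq2 i k hik), hbu, hCsum]
      have hcond : (∀ i ∈ List.ofFn (fun k : Fin r => (M (Fin.cast hμr.symm k)).sum Finset.card), 0 < i) ∧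
          (List.ofFn (fun k : Fin r => (M (Fin.cast hμr.symm k)).sum Finset.card)).sum = j := by
        constructor
        · intro i hi
          rw [List.mem_ofFn] at hi
          obtain ⟨k, rfl⟩ := hi
          exact hwt _
        · rw [List.sum_ofFn]
          exact hsum
      simp only [Finset.mem_filter]
      refine ⟨⟨Finset.mem_univ _, hnonempty, ?_, ?_⟩, ?_⟩
      · intro i k hik
        exact hq2 _ _ (fun h => hik (Fin.cast_injective hμr.symm h))
      · ext c
        rw [← hbu]
        simp only [Finset.mem_biUnion, Finset.mem_univ, true_and]
        constructor
        · rintro ⟨i, hi⟩; exact ⟨Fin.cast hμr.symm i, hi⟩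
        · rintro ⟨i, hi⟩; exact ⟨Fin.cast hμr i, by simpa using hi⟩
      · apply Composition.ext
        show (compOf j (fun k => M (Fin.cast hμr.symm k))).blocks = μ.blocks
        rw [compOf, dif_pos hcond]
        apply List.ext_get
        · rw [List.length_ofFn, hμr]
        · intro i hi1 hi2
          rw [List.get_ofFn]
          exact hq3 ⟨i, hi2⟩
    case li =>
      intro L hL
      funext i
      rfl
    case ri =>
      intro M hM
      funext i
      rfl
  · intro L hL
    simp only [Finset.mem_coe, Finset.mem_filter] at hL
    obtain ⟨-, ⟨h1, h2, h3⟩⟩ := hL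
    have hcond : (∀ i ∈ List.ofFn (fun i => (L i).sum Finset.card), 0 < i) ∧
        (List.ofFn (fun i => (L i).sum Finset.card)).sum = j := by
      constructor
      · intro i hi
        rw [List.mem_ofFn] at hi
        obtain ⟨k, rfl⟩ := hi
        exact wt_pos_of_nonempty w hC
          (h3 ▸ Finset.subset_biUnion_of_mem L (Finset.mem_univ k)) (h1 k)
      · rw [List.sum_ofFn, ← Finset.sum_biUnion (fun i _ k _ hik => h2 i k hik), h3, hCsum]
    rw [Finset.mem_coe, Finset.mem_filter]
    refine ⟨Finset.mem_univ _, ?_⟩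
    show (compOf j L).length = r
    rw [compOf, dif_pos hcond]
    simp [Composition.length]

noncomputable def partOf (j : ℕ) (C : Finset (Finset (Fin n))) : Nat.Partition j :=
  if h : (∀ i ∈ Multiset.map Finset.card C.val, 0 < i) ∧ (Multiset.map Finset.card C.val).sum = j
  then ⟨Multiset.map Finset.card C.val, fun hi => h.1 _ hi, h.2⟩
  else Nat.Partition.indiscrete j

lemma eta_eq (j : ℕ) (μ : Nat.Partition j) :
    eta w μ.parts = ((Wset w j).filter (fun T => partOf j T = μ)).card := by
  classical
  rw [eta, natCard_subtype]
  congr 1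
  ext T
  simp only [Finset.mem_filter, Finset.mem_univ, true_and, Wset, Finset.mem_powerset]
  constructor
  · rintro ⟨hsub, hmap⟩
    have hsum : T.sum Finset.card = j := by
      show (Multiset.map Finset.card T.val).sum = j
      rw [hmap, μ.parts_sum]
    have hpos : ∀ i ∈ Multiset.map Finset.card T.val, 0 < i := by
      intro i hi
      obtain ⟨c, hc, rfl⟩ := Multiset.mem_map.1 hi
      exact card_pos_of_mem_cyclesOf w (hsub c hc)
    refine ⟨⟨fun c hc => hsub c hc, hsum⟩, ?_⟩
    rw [partOf, dif_pos ⟨hpos, hsum⟩]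
    exact Nat.Partition.ext hmap
  · rintro ⟨⟨hsub, hsum⟩, hpart⟩
    have hpos : ∀ i ∈ Multiset.map Finset.card T.val, 0 < i := by
      intro i hi
      obtain ⟨c, hc, rfl⟩ := Multiset.mem_map.1 hi
      exact card_pos_of_mem_cyclesOf w (hsub hc)
    rw [partOf, dif_pos ⟨hpos, hsum⟩] at hpart
    exact ⟨fun c hc => hsub hc, (congrArg Nat.Partition.parts hpart)⟩

lemma rhs_eq (j : ℕ) :
    ∑ μ : Nat.Partition j, (-1 : ℤ) ^ Multiset.card μ.parts * eta w μ.parts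
      = ∑ C ∈ Wset w j, (-1 : ℤ) ^ C.card := by
  classical
  rw [← Finset.sum_fiberwise (Wset w j) (fun C => partOf j C) (fun C => (-1 : ℤ) ^ C.card)]
  apply Finset.sum_congr rfl
  intro μ _
  rw [eta_eq w j μ]
  have : ∀ T ∈ (Wset w j).filter (fun T => partOf j T = μ),
      ((-1 : ℤ)) ^ T.card = (-1) ^ Multiset.card μ.parts := by
    intro T hT
    rw [Finset.mem_filter] at hT
    obtain ⟨hTW, hTμ⟩ := hT
    have hsub : T ⊆ cyclesOf w := by
      rw [Wset, Finset.mem_filter, Finset.mem_powerset] at hTW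
      exact hTW.1
    have hsum : T.sum Finset.card = j := by
      rw [Wset, Finset.mem_filter] at hTW
      exact hTW.2
    have hpos : ∀ i ∈ Multiset.map Finset.card T.val, 0 < i := by
      intro i hi
      obtain ⟨c, hc, rfl⟩ := Multiset.mem_map.1 hi
      exact card_pos_of_mem_cyclesOf w (hsub hc)
    have hparts : μ.parts = Multiset.map Finset.card T.val := by
      rw [← hTμ, partOf, dif_pos ⟨hpos, hsum⟩]
    rw [hparts, Multiset.card_map]
    rfl
  rw [Finset.sum_congr rfl this, Finset.sum_const, nsmul_eq_mul, mul_comm]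

lemma wset_card_le (j : ℕ) {C : Finset (Finset (Fin n))} (hC : C ∈ Wset w j) : C.card ≤ j := by
  rw [Wset, Finset.mem_filter, Finset.mem_powerset] at hC
  calc C.card = C.card • 1 := by simp
    _ ≤ C.sum Finset.card := Finset.card_nsmul_le_sum C _ _
        (fun c hc => card_pos_of_mem_cyclesOf w (hC.1 hc))
    _ = j := hC.2

lemma lhs_eq (j : ℕ) :
    ∑ μ : Composition j, (-1 : ℤ) ^ μ.length * zeta w μ.blocks
      = ∑ C ∈ Wset w j, (-1 : ℤ) ^ C.card := by
  classical
  have step1 : ∀ μ : Composition j, ((-1 : ℤ)) ^ μ.length * zeta w μ.blocks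
      = ∑ C ∈ Wset w j, (-1 : ℤ) ^ μ.length * Zcount w j μ C := by
    intro μ
    rw [zeta_eq_sum w j μ, Nat.cast_sum, Finset.mul_sum]
  rw [Finset.sum_congr rfl (fun μ _ => step1 μ), Finset.sum_comm]
  apply Finset.sum_congr rfl
  intro C hC
  have hfib := Finset.sum_fiberwise_eq_sum_filter (univ : Finset (Composition j))
    (Finset.range (j+1)) (fun μ => μ.length)
    (fun μ => (-1 : ℤ) ^ μ.length * Zcount w j μ C)
  have huniv : (univ : Finset (Composition j)).filter
      (fun μ => μ.length ∈ Finset.range (j+1)) = univ := by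
    apply Finset.filter_true_of_mem
    intro μ _
    rw [Finset.mem_range]
    exact Nat.lt_succ_of_le μ.length_le
  rw [huniv] at hfib
  rw [← hfib]
  have hstep : ∀ r ∈ Finset.range (j+1),
      (∑ μ ∈ (univ : Finset (Composition j)).filter (fun μ => μ.length = r),
        (-1 : ℤ) ^ μ.length * Zcount w j μ C) = (-1) ^ r * ospCount r C := by
    intro r _
    have h1 : ∀ μ ∈ (univ : Finset (Composition j)).filter (fun μ => μ.length = r),
        ((-1 : ℤ)) ^ μ.length * Zcount w j μ C = (-1) ^ r * Zcount w j μ C := by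
      intro μ hμ
      rw [(Finset.mem_filter.1 hμ).2]
    rw [Finset.sum_congr rfl h1, ← Finset.mul_sum]
    congr 1
    rw [Zsum w j hC r, Nat.cast_sum]
  rw [Finset.sum_congr rfl hstep]
  have hsub : Finset.range (C.card + 1) ⊆ Finset.range (j + 1) := by
    intro x hx
    rw [Finset.mem_range] at hx ⊢
    have := wset_card_le w j hC
    omega
  have hvan : ∀ r ∈ Finset.range (j+1), r ∉ Finset.range (C.card + 1) →
      ((-1 : ℤ)) ^ r * ospCount r C = 0 := by
    intro r _ hr
    rw [Finset.mem_range, not_lt] at hr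
    rw [ospCount_eq_zero_of_lt (by omega)]
    simp
  rw [← Finset.sum_subset hsub hvan]
  exact osp_core C.card C le_rfl

end Glue

theorem stmt0 (j n : ℕ) (hj : 0 < j) (hn : 0 < n) (hjn : j ≤ n) (w : Equiv.Perm (Fin n)) :
    ∑ μ : Composition j, (-1 : ℤ) ^ μ.length * zeta w μ.blocks =
      ∑ μ : Nat.Partition j, (-1 : ℤ) ^ Multiset.card μ.parts * eta w μ.parts := by
  exact (lhs_eq w j).trans (rhs_eq w j).symm
end

section
/- (Doubilet's inversion formula.) Let λ = (λ_1, …, λ_ℓ) ⊢ n be a partition with ℓ = ℓ(λ) parts. Then for every w ∈ 𝔖_n, χ^λ(w) = Σ_σ sgn(σ) ζ^{σλ~}(w), where the sum runs over all permutations σ ∈ 𝔖_n fixing every point i > ℓ and satisfying λ_i + σ(i) − i ≥ 0 for all i ≤ ℓ, the sequence σλ is defined by (σλ)_i = λ_i + σ(i) − i, and σλ~ is the partition of n obtained by arranging the nonzero entries of σλ in weakly decreasing order. -/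
open scoped Classical

section aux
open Finset MvPolynomial

lemma mem_cyclesOf' {n : ℕ} {w : Equiv.Perm (Fin n)} {s : Finset (Fin n)} :
    s ∈ cyclesOf w ↔ IsCycleSetOf w s := by simp [cyclesOf]

lemma card_pos_of_mem_cyclesOf_s11 {n : ℕ} {w : Equiv.Perm (Fin n)} {s : Finset (Fin n)}
    (hs : s ∈ cyclesOf w) : 0 < s.card := by
  rw [mem_cyclesOf'] at hs
  obtain ⟨x, hx⟩ := hs
  exact Finset.card_pos.2 ⟨x, (hx x).2 (Equiv.Perm.SameCycle.refl w x)⟩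

lemma disjoint_of_mem_cyclesOf {n : ℕ} {w : Equiv.Perm (Fin n)} {s t : Finset (Fin n)}
    (hs : s ∈ cyclesOf w) (ht : t ∈ cyclesOf w) (hst : s ≠ t) : Disjoint s t := by
  rw [mem_cyclesOf'] at hs ht
  obtain ⟨x, hx⟩ := hs; obtain ⟨y, hy⟩ := ht
  rw [Finset.disjoint_left]
  intro a has hat
  apply hst
  have hxy : w.SameCycle x y := ((hx a).1 has).trans (((hy a).1 hat).symm)
  ext z
  rw [hx z, hy z]
  exact ⟨fun h => hxy.symm.trans h, fun h => hxy.trans h⟩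

lemma sum_cyclesOf_card {n : ℕ} (w : Equiv.Perm (Fin n)) : ∑ c ∈ cyclesOf w, c.card = n := by
  have hU : (cyclesOf w).biUnion id = Finset.univ := by
    apply Finset.eq_univ_iff_forall.2
    intro y
    refine Finset.mem_biUnion.2 ⟨Finset.univ.filter (fun z => w.SameCycle y z), ?_, ?_⟩
    · rw [mem_cyclesOf']; exact ⟨y, fun z => by simp⟩
    · simp [Equiv.Perm.SameCycle.refl]
  calc ∑ c ∈ cyclesOf w, c.card = ((cyclesOf w).biUnion id).card :=
        (Finset.card_biUnion (fun s hs t ht hst => disjoint_of_mem_cyclesOf hs ht hst)).symm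
    _ = n := by rw [hU, Finset.card_univ, Fintype.card_fin]

/-- index equivalence from a list permutation -/
lemma perm_get_equiv {α : Type*} {l₁ l₂ : List α} (h : l₁.Perm l₂) :
    ∃ e : Fin l₁.length ≃ Fin l₂.length, ∀ i, l₂.get (e i) = l₁.get i := by
  induction h with
  | nil => exact ⟨Equiv.refl _, fun i => i.elim0⟩
  | cons x h ih =>
      obtain ⟨e, he⟩ := ih
      refine ⟨(finSuccEquiv _).trans ((Equiv.optionCongr e).trans (finSuccEquiv _).symm), ?_⟩
      intro i
      induction i using Fin.cases with
      | zero => simp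
      | succ j => simpa using he j
  | swap x y l =>
      refine ⟨⟨fun i => ⟨if i.1 = 0 then 1 else if i.1 = 1 then 0 else i.1, by
          rcases i with ⟨(_|_|k), hk⟩ <;> simp only [List.length_cons] at hk ⊢ <;> split_ifs <;> omega⟩,
        fun i => ⟨if i.1 = 0 then 1 else if i.1 = 1 then 0 else i.1, by
          rcases i with ⟨(_|_|k), hk⟩ <;> simp only [List.length_cons] at hk ⊢ <;> split_ifs <;> omega⟩,
        fun i => by rcases i with ⟨(_|_|k), hk⟩ <;> rfl,
        fun i => by rcases i with ⟨(_|_|k), hk⟩ <;> rfl⟩, ?_⟩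
      rintro ⟨(_|_|k), hk⟩ <;> rfl
  | trans h₁ h₂ ih₁ ih₂ =>
      obtain ⟨e₁, he₁⟩ := ih₁
      obtain ⟨e₂, he₂⟩ := ih₂
      exact ⟨e₁.trans e₂, fun i => (he₂ _).trans (he₁ _)⟩

/-- enumeration of a finset matching a list of values -/
lemma exists_equiv_of_map_eq {α : Type*} {s : Finset α} {f : α → ℕ} {l : List ℕ}
    (h : Multiset.map f s.val = ↑l) :
    ∃ e : Fin l.length ≃ {x // x ∈ s}, ∀ j, f (e j) = l.get j := by
  have hperm : (s.toList.map f).Perm l := by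
    rw [← Multiset.coe_eq_coe, ← Multiset.map_coe, Finset.coe_toList, h]
  obtain ⟨e₁, he₁⟩ := perm_get_equiv hperm
  have hlen : (s.toList.map f).length = s.toList.length := List.length_map _
  refine ⟨e₁.symm.trans ((finCongr hlen).trans ((s.nodup_toList.getEquiv _).trans
    (Equiv.subtypeEquivRight (fun x => by simp [Finset.mem_toList])))), ?_⟩
  intro j
  have := he₁ (e₁.symm j)
  rw [Equiv.apply_symm_apply] at this
  rw [this]
  simp [List.Nodup.getEquiv, Equiv.subtypeEquivRight, List.get_eq_getElem, List.getElem_map]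
  rfl

lemma prod_X_pow_single {ι τ : Type*} [DecidableEq τ] (s : Finset ι) (g : ι → τ) (h : ι → ℕ) :
    (∏ c ∈ s, (X (g c) : MvPolynomial τ ℤ) ^ h c) =
      monomial (∑ c ∈ s, Finsupp.single (g c) (h c)) 1 := by
  induction s using Finset.cons_induction with
  | empty => simp
  | cons a s ha ih =>
      rw [Finset.prod_cons, Finset.sum_cons, ih, X_pow_eq_monomial, monomial_mul, one_mul]

lemma sum_single_univ {τ : Type*} [Fintype τ] [DecidableEq τ] (g : τ → ℕ) :
    (∑ i : τ, Finsupp.single i (g i)) = Finsupp.equivFunOnFinite.symm g := by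
  ext j
  rw [Finsupp.finset_sum_apply]
  simp [Finsupp.single_apply]

lemma sum_single_eq_iff {ι τ : Type*} [Fintype ι] [Fintype τ] [DecidableEq τ]
    (p : ι → τ) (h : ι → ℕ) (g : τ → ℕ) :
    (∑ c : ι, Finsupp.single (p c) (h c)) = Finsupp.equivFunOnFinite.symm g ↔
      ∀ i, ∑ c ∈ Finset.univ.filter (fun c => p c = i), h c = g i := by
  rw [Finsupp.ext_iff]
  apply forall_congr'
  intro i
  rw [Finsupp.finset_sum_apply]
  have : (Finsupp.equivFunOnFinite.symm g) i = g i := rfl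
  rw [this]
  simp only [Finsupp.single_apply]
  rw [Finset.sum_filter]

lemma coeff_count {ι τ : Type*} [Fintype ι] [Fintype τ] [DecidableEq τ]
    (h : ι → ℕ) (g : τ → ℕ) :
    MvPolynomial.coeff (Finsupp.equivFunOnFinite.symm g)
      (∏ c : ι, ∑ i : τ, (X i : MvPolynomial τ ℤ) ^ h c) =
    Nat.card {f : ι → τ //
      ∀ i, ∑ c ∈ Finset.univ.filter (fun c => f c = i), h c = g i} := by
  rw [Finset.prod_univ_sum, Fintype.piFinset_univ]
  have : ∀ f : ι → τ, (∏ c : ι, (X (f c) : MvPolynomial τ ℤ) ^ h c) =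
      monomial (∑ c : ι, Finsupp.single (f c) (h c)) 1 :=
    fun f => prod_X_pow_single _ _ _
  rw [Finset.sum_congr rfl (fun f _ => this f), MvPolynomial.coeff_sum]
  have : ∀ f : ι → τ, MvPolynomial.coeff (Finsupp.equivFunOnFinite.symm g)
      ((monomial (∑ c : ι, Finsupp.single (f c) (h c))) (1 : ℤ)) =
      if (∀ i, ∑ c ∈ Finset.univ.filter (fun c => f c = i), h c = g i) then 1 else 0 := by
    intro f
    rw [MvPolynomial.coeff_monomial]
    congr 1
    rw [eq_iff_iff]
    exact sum_single_eq_iff f h g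
  rw [Finset.sum_congr rfl (fun f _ => this f), Finset.sum_boole,
    Nat.card_eq_fintype_card, Fintype.card_subtype]

lemma list_sum_eq_sum_get_s11 (m : List ℕ) : ∑ i : Fin m.length, m.get i = m.sum := by
  conv_rhs => rw [← List.ofFn_get m]
  rw [List.sum_ofFn]

lemma zeta_eq {n : ℕ} (w : Equiv.Perm (Fin n)) (m : List ℕ) (hm : m.sum = n) :
    zeta w m = Nat.card {f : {c // c ∈ cyclesOf w} → Fin m.length //
      ∀ i, ∑ c ∈ Finset.univ.filter (fun c : {c // c ∈ cyclesOf w} => f c = i),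
        (c : Finset (Fin n)).card = m.get i} := by
  rw [zeta]
  have key1 : ∀ f : {c // c ∈ cyclesOf w} → Fin m.length, ∀ i,
      ∀ c ∈ (Finset.univ.filter (fun c => f c = i)).image Subtype.val, c ∈ cyclesOf w := by
    intro f i c hc
    obtain ⟨c', _, rfl⟩ := Finset.mem_image.1 hc
    exact c'.2
  have key2 : ∀ f : {c // c ∈ cyclesOf w} → Fin m.length, ∀ i j, i ≠ j →
      Disjoint ((Finset.univ.filter (fun c => f c = i)).image Subtype.val)
        ((Finset.univ.filter (fun c => f c = j)).image Subtype.val) := by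
    intro f i j hij
    rw [Finset.disjoint_image Subtype.val_injective, Finset.disjoint_left]
    rintro c hc hc'
    simp only [Finset.mem_filter] at hc hc'
    exact hij (hc.2 ▸ hc'.2)
  have key3 : ∀ F : {f : {c // c ∈ cyclesOf w} → Fin m.length //
      ∀ i, ∑ c ∈ Finset.univ.filter (fun c : {c // c ∈ cyclesOf w} => f c = i),
        (c : Finset (Fin n)).card = m.get i}, ∀ i,
      (((Finset.univ.filter (fun c => F.1 c = i)).image Subtype.val).sum Finset.card)
        = m.get i := by
    intro F i
    rw [Finset.sum_image (fun a _ b _ h => Subtype.val_injective h)]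
    exact F.2 i
  refine (Nat.card_eq_of_bijective (fun F =>
    ⟨fun i => (Finset.univ.filter (fun c => F.1 c = i)).image Subtype.val,
      key1 F.1, key2 F.1, key3 F⟩) ⟨?_, ?_⟩).symm
  · -- injective
    rintro ⟨f, hf⟩ ⟨g, hg⟩ h
    simp only [Subtype.mk.injEq] at h ⊢
    funext c
    have h1 : (c : Finset (Fin n)) ∈ (Finset.univ.filter (fun c' => f c' = f c)).image
        Subtype.val := Finset.mem_image.2 ⟨c, by simp, rfl⟩
    rw [funext_iff] at h
    have h2 := (h (f c)) ▸ h1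
    obtain ⟨c', hc', hcc⟩ := Finset.mem_image.1 h2
    have : c' = c := Subtype.val_injective hcc
    subst this
    exact (Finset.mem_filter.1 hc').2.symm
  · -- surjective
    rintro ⟨L, h1, h2, h3⟩
    -- coverage
    have hcov : ∀ c : {c // c ∈ cyclesOf w}, ∃! i, (c : Finset (Fin n)) ∈ L i := by
      have hUsub : (Finset.univ.biUnion L) ⊆ cyclesOf w := by
        intro c hc
        obtain ⟨i, _, hci⟩ := Finset.mem_biUnion.1 hc
        exact h1 i c hci
      have hUsum : ∑ c ∈ Finset.univ.biUnion L, c.card = n := by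
        rw [Finset.sum_biUnion]
        · calc ∑ i : Fin m.length, ∑ c ∈ L i, c.card
              = ∑ i : Fin m.length, m.get i := by
                exact Finset.sum_congr rfl (fun i _ => h3 i)
            _ = m.sum := list_sum_eq_sum_get_s11 m
            _ = n := hm
        · intro i _ j _ hij
          exact h2 i j hij
      have hUeq : Finset.univ.biUnion L = cyclesOf w := by
        by_contra hne
        have hss : Finset.univ.biUnion L ⊂ cyclesOf w := hUsub.ssubset_of_ne hne
        obtain ⟨c, hcmem, hcnot⟩ := Finset.exists_of_ssubset hss
        have : ∑ c ∈ Finset.univ.biUnion L, c.card < ∑ c ∈ cyclesOf w, c.card :=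
          Finset.sum_lt_sum_of_subset hUsub hcmem hcnot (card_pos_of_mem_cyclesOf_s11 hcmem)
            (fun _ _ _ => Nat.zero_le _)
        rw [hUsum, sum_cyclesOf_card] at this
        exact lt_irrefl _ this
      intro c
      have : (c : Finset (Fin n)) ∈ Finset.univ.biUnion L := by rw [hUeq]; exact c.2
      obtain ⟨i, _, hci⟩ := Finset.mem_biUnion.1 this
      refine ⟨i, hci, ?_⟩
      intro j hcj
      by_contra hij
      exact (Finset.disjoint_left.1 (h2 j i hij) hcj) hci
    choose f hf hfu using hcov
    have himg : ∀ i, (Finset.univ.filter (fun c => f c = i)).image Subtype.val = L i := by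
      intro i
      ext d
      constructor
      · intro hd
        obtain ⟨c, hc, rfl⟩ := Finset.mem_image.1 hd
        have : f c = i := (Finset.mem_filter.1 hc).2
        exact this ▸ hf c
      · intro hd
        have hdc : d ∈ cyclesOf w := h1 i d hd
        refine Finset.mem_image.2 ⟨⟨d, hdc⟩, Finset.mem_filter.2 ⟨Finset.mem_univ _, ?_⟩, rfl⟩
        exact (hfu ⟨d, hdc⟩ i hd).symm
    refine ⟨⟨f, ?_⟩, ?_⟩
    · intro i
      rw [Finset.sum_image (fun a _ b _ h => Subtype.val_injective h) |>.symm, himg i]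
      exact h3 i
    · apply Subtype.ext
      funext i
      exact himg i

lemma multiset_filter_ofFn (n : ℕ) (ν : Fin n → ℕ) :
    (↑((List.ofFn ν).filter (fun a => a ≠ 0)) : Multiset ℕ) =
    Multiset.map ν (Finset.univ.filter (fun i => ν i ≠ 0)).val := by
  have h1 : Multiset.map ν Finset.univ.val = (↑(List.ofFn ν) : Multiset ℕ) := by
    rw [List.ofFn_eq_map, Fin.univ_def]
    rfl
  have h2 := Multiset.filter_map (fun a : ℕ => a ≠ 0) ν Finset.univ.val
  have h4 : Multiset.filter (fun i => ν i ≠ 0) Finset.univ.val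
      = Multiset.filter ((fun a : ℕ => a ≠ 0) ∘ ν) Finset.univ.val := by
    apply Multiset.filter_congr
    intro x _
    simp [Function.comp]
  rw [Finset.filter_val, h4, ← h2, h1, Multiset.filter_coe]
lemma sum_filter_ofFn (n : ℕ) (ν : Fin n → ℕ) :
    ((List.ofFn ν).filter (fun a => a ≠ 0)).sum = ∑ i : Fin n, ν i := by
  have h3 : (((List.ofFn ν).filter (fun a => a ≠ 0) : List ℕ) : Multiset ℕ).sum
      = ((List.ofFn ν).filter (fun a => a ≠ 0)).sum := Multiset.sum_coe _
  rw [← h3, multiset_filter_ofFn]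
  have : (Multiset.map ν (Finset.univ.filter (fun i => ν i ≠ 0)).val).sum
      = ∑ i ∈ Finset.univ.filter (fun i => ν i ≠ 0), ν i := rfl
  rw [this, Finset.sum_filter_ne_zero]

lemma count_congr {κ : Type*} [Fintype κ] (h : κ → ℕ) (hpos : ∀ c, 0 < h c)
    {ℓ : ℕ} (μ : Fin ℓ → ℕ) (m : List ℕ)
    (e : Fin m.length ≃ {i : Fin ℓ // μ i ≠ 0}) (he : ∀ j, μ (e j) = m.get j) :
    Nat.card {f : κ → Fin ℓ //
        ∀ i, ∑ c ∈ Finset.univ.filter (fun c => f c = i), h c = μ i} =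
      Nat.card {f : κ → Fin m.length //
        ∀ j, ∑ c ∈ Finset.univ.filter (fun c => f c = j), h c = m.get j} := by
  apply Nat.card_congr
  have hne : ∀ (f : κ → Fin ℓ)
      (hf : ∀ i, ∑ c ∈ Finset.univ.filter (fun c => f c = i), h c = μ i) (c : κ),
      μ (f c) ≠ 0 := by
    intro f hf c h0
    have h1 := hf (f c)
    rw [h0] at h1
    have h2 : c ∈ Finset.univ.filter (fun c' => f c' = f c) := by simp
    have h3 : 0 < ∑ c' ∈ Finset.univ.filter (fun c' => f c' = f c), h c' :=
      Finset.sum_pos' (fun _ _ => Nat.zero_le _) ⟨c, h2, hpos c⟩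
    omega
  refine ⟨fun F => ⟨fun c => e.symm ⟨F.1 c, hne F.1 F.2 c⟩, ?_⟩,
    fun G => ⟨fun c => (e (G.1 c) : Fin ℓ), ?_⟩, ?_, ?_⟩
  · -- fiber sums for the image of F
    intro j
    have : ∀ c : κ, (e.symm ⟨F.1 c, hne F.1 F.2 c⟩ = j) ↔ (F.1 c = ((e j : {i // μ i ≠ 0}) : Fin ℓ)) := by
      intro c
      rw [Equiv.symm_apply_eq]
      constructor
      · intro hh; rw [← hh]
      · intro hh; exact Subtype.ext hh
    rw [← he j, ← F.2 ((e j : {i // μ i ≠ 0}) : Fin ℓ)]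
    apply Finset.sum_congr _ (fun _ _ => rfl)
    ext c
    simp [this c]
  · -- fiber sums for the image of G
    intro i
    by_cases hi : μ i = 0
    · rw [hi]
      apply Finset.sum_eq_zero
      intro c hc
      have hthis := (Finset.mem_filter.1 hc).2
      simp only at hthis
      have h2 := (e (G.1 c)).2
      rw [hthis] at h2
      exact absurd hi h2
    · have hieq : ((e (e.symm ⟨i, hi⟩) : {i // μ i ≠ 0}) : Fin ℓ) = i := by
        rw [Equiv.apply_symm_apply]
      have : ∀ c : κ, ((e (G.1 c) : Fin ℓ) = i) ↔ (G.1 c = e.symm ⟨i, hi⟩) := by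
        intro c
        constructor
        · intro hh
          have : e (G.1 c) = ⟨i, hi⟩ := Subtype.ext hh
          rw [← this, Equiv.symm_apply_apply]
        · intro hh
          rw [hh, hieq]
      have hmu : μ i = m.get (e.symm ⟨i, hi⟩) := by
        have := he (e.symm ⟨i, hi⟩)
        rwa [Equiv.apply_symm_apply] at this
      rw [hmu, ← G.2 (e.symm ⟨i, hi⟩)]
      apply Finset.sum_congr _ (fun _ _ => rfl)
      ext c
      simp only [Finset.mem_filter, Finset.mem_univ, true_and]
      exact this c
  · intro F
    apply Subtype.ext
    funext c
    simp
  · intro G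
    apply Subtype.ext
    funext c
    simp

lemma prod_pairs_eq_double {ℓ : ℕ} {M : Type*} [CommMonoid M] (F : Fin ℓ → Fin ℓ → M) :
    (∏ p ∈ Finset.univ.filter (fun p : Fin ℓ × Fin ℓ => p.1 < p.2), F p.1 p.2) =
      ∏ i : Fin ℓ, ∏ j ∈ Finset.Ioi i, F i j := by
  rw [Finset.prod_filter, ← Finset.univ_product_univ, Finset.prod_product]
  apply Finset.prod_congr rfl
  intro i _
  rw [← Finset.prod_filter]
  apply Finset.prod_congr _ (fun _ _ => rfl)
  ext j
  simp

lemma vandermonde_expand (ℓ : ℕ) :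
    (∏ p ∈ Finset.univ.filter (fun p : Fin ℓ × Fin ℓ => p.1 < p.2),
      (X p.1 - X p.2 : MvPolynomial (Fin ℓ) ℤ)) =
    ∑ τ : Equiv.Perm (Fin ℓ), (Equiv.Perm.sign τ : ℤ) •
      ∏ i : Fin ℓ, (X i : MvPolynomial (Fin ℓ) ℤ) ^ (ℓ - 1 - (τ i : ℕ)) := by
  have h1 : (∏ p ∈ Finset.univ.filter (fun p : Fin ℓ × Fin ℓ => p.1 < p.2),
      (X p.1 - X p.2 : MvPolynomial (Fin ℓ) ℤ)) =
      Matrix.det (Matrix.vandermonde (fun i : Fin ℓ => (X i.rev : MvPolynomial (Fin ℓ) ℤ))) := by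
    rw [Matrix.det_vandermonde, ← prod_pairs_eq_double (fun i j =>
      (X j.rev - X i.rev : MvPolynomial (Fin ℓ) ℤ))]
    refine Finset.prod_nbij' (fun p => (p.2.rev, p.1.rev)) (fun p => (p.2.rev, p.1.rev))
      ?_ ?_ ?_ ?_ ?_
    · rintro ⟨a, b⟩ hab
      simp only [Finset.mem_filter, Finset.mem_univ, true_and] at hab ⊢
      exact Fin.rev_lt_rev.2 hab
    · rintro ⟨a, b⟩ hab
      simp only [Finset.mem_filter, Finset.mem_univ, true_and] at hab ⊢
      exact Fin.rev_lt_rev.2 hab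
    · rintro ⟨a, b⟩ _; simp [Fin.rev_rev]
    · rintro ⟨a, b⟩ _; simp [Fin.rev_rev]
    · rintro ⟨a, b⟩ _; simp [Fin.rev_rev]
  rw [h1, Matrix.det_apply]
  have hr : (Fin.revPerm : Equiv.Perm (Fin ℓ)) * Fin.revPerm = 1 := by
    ext x; simp
  have hrinv : (Fin.revPerm : Equiv.Perm (Fin ℓ))⁻¹ = Fin.revPerm :=
    inv_eq_of_mul_eq_one_right hr
  have hinv : Function.Involutive
      (fun τ : Equiv.Perm (Fin ℓ) => Fin.revPerm * τ⁻¹ * Fin.revPerm) := by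
    intro τ
    dsimp only
    rw [mul_inv_rev, mul_inv_rev, hrinv, inv_inv]
    simp only [← mul_assoc]
    rw [hr, one_mul, mul_assoc, hr, mul_one]
  refine Fintype.sum_equiv ⟨fun τ => Fin.revPerm * τ⁻¹ * Fin.revPerm,
    fun τ => Fin.revPerm * τ⁻¹ * Fin.revPerm, hinv.leftInverse, hinv.rightInverse⟩ _ _ ?_
  intro τ
  simp only [Equiv.coe_fn_mk]
  have hsign : Equiv.Perm.sign (Fin.revPerm * τ⁻¹ * Fin.revPerm : Equiv.Perm (Fin ℓ)) =
      Equiv.Perm.sign τ := by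
    rw [map_mul, map_mul, Equiv.Perm.sign_inv]
    rcases Int.units_eq_one_or (Equiv.Perm.sign (Fin.revPerm : Equiv.Perm (Fin ℓ))) with h | h <;>
      rw [h] <;> simp
  rw [hsign]
  have hprod : (∏ i : Fin ℓ, Matrix.vandermonde
        (fun i : Fin ℓ => (X i.rev : MvPolynomial (Fin ℓ) ℤ)) (τ i) i) =
      ∏ i : Fin ℓ, (X i : MvPolynomial (Fin ℓ) ℤ) ^
        (ℓ - 1 - (((Fin.revPerm * τ⁻¹ * Fin.revPerm : Equiv.Perm (Fin ℓ)) i : Fin ℓ) : ℕ)) := by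
    simp only [Matrix.vandermonde_apply]
    rw [← Equiv.prod_comp ((τ⁻¹ : Equiv.Perm (Fin ℓ)) * Fin.revPerm)
      (fun j => (X (τ j).rev : MvPolynomial (Fin ℓ) ℤ) ^ (j : ℕ))]
    apply Finset.prod_congr rfl
    intro i _
    simp only [Equiv.Perm.mul_apply, Fin.revPerm_apply, Equiv.Perm.inv_def, Equiv.apply_symm_apply, Fin.rev_rev]
    congr 1
    have h1 : ((τ⁻¹ (Fin.rev i)) : ℕ) < ℓ := (τ⁻¹ (Fin.rev i)).isLt
    rw [Fin.val_rev]
    omega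
  rw [hprod]
  rfl

lemma key_zeta {n : ℕ} (w : Equiv.Perm (Fin n)) (lam : List ℕ) (hsum : lam.sum = n)
    (hln : lam.length ≤ n) (σ : Equiv.Perm (Fin n))
    (hfix : ∀ i : Fin n, lam.length ≤ (i : ℕ) → σ i = i)
    (hcond : ∀ i : Fin n, (i : ℕ) < lam.length → (i : ℕ) ≤ lam.getD (i : ℕ) 0 + ((σ i : ℕ)))
    (μ : Fin lam.length → ℕ)
    (hμ : ∀ j : Fin lam.length,
      μ j = lam.getD (j : ℕ) 0 + ((σ (Fin.castLE hln j) : ℕ)) - (j : ℕ)) :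
    zeta w (List.insertionSort (· ≥ ·)
      ((List.ofFn fun i : Fin n => lam.getD (i : ℕ) 0 + ((σ i : ℕ)) - (i : ℕ)).filter
        fun a => a ≠ 0)) =
    Nat.card {f : {c // c ∈ cyclesOf w} → Fin lam.length //
      ∀ i, ∑ c ∈ Finset.univ.filter (fun c => f c = i), (c : Finset (Fin n)).card = μ i} := by
  set ν : Fin n → ℕ := fun i => lam.getD (i : ℕ) 0 + ((σ i : ℕ)) - (i : ℕ) with hν
  have hμν : μ = fun j => ν (Fin.castLE hln j) := funext fun j => by rw [hμ]; rfl
  set l₀ := (List.ofFn ν).filter (fun a => a ≠ 0) with hl₀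
  set m := List.insertionSort (· ≥ ·) l₀ with hmdef
  have hperm : m.Perm l₀ := List.perm_insertionSort _ _
  have h1 : ∀ i : Fin n, (i : ℕ) ≤ lam.getD (i : ℕ) 0 + (σ i : ℕ) := by
    intro i
    by_cases hi : (i : ℕ) < lam.length
    · exact hcond i hi
    · rw [hfix i (le_of_not_gt hi)]; omega
  -- sum of ν
  have hsum_getD : ∑ i : Fin n, lam.getD (i : ℕ) 0 = lam.sum := by
    rw [Fin.sum_univ_eq_sum_range (fun i => lam.getD i 0) n]
    rw [← Finset.sum_subset (Finset.range_subset_range.2 hln)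
      (fun x _ hx => List.getD_eq_default _ _ (by simpa using hx))]
    rw [← Fin.sum_univ_eq_sum_range (fun i => lam.getD i 0) lam.length]
    rw [← list_sum_eq_sum_get_s11 lam]
    exact Finset.sum_congr rfl fun i _ => by
      rw [List.getD_eq_getElem _ _ i.isLt, List.get_eq_getElem]
  have hνsum : ∑ i : Fin n, ν i = n := by
    have hz : ((∑ i : Fin n, ν i : ℕ) : ℤ) = ((n : ℕ) : ℤ) := by
      rw [Nat.cast_sum]
      have : ∀ i : Fin n, ((ν i : ℕ) : ℤ) =
          ((lam.getD (i : ℕ) 0 : ℕ) : ℤ) + ((σ i : ℕ) : ℤ) - ((i : ℕ) : ℤ) := by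
        intro i
        rw [hν]
        push_cast [Nat.cast_sub (h1 i)]
        ring
      rw [Finset.sum_congr rfl fun i _ => this i]
      rw [Finset.sum_sub_distrib, Finset.sum_add_distrib]
      have hσ : ∑ i : Fin n, ((σ i : ℕ) : ℤ) = ∑ i : Fin n, ((i : ℕ) : ℤ) :=
        Equiv.sum_comp σ (fun i => ((i : ℕ) : ℤ))
      rw [hσ, add_sub_cancel_right, ← Nat.cast_sum, hsum_getD, hsum]
    exact_mod_cast hz
  have hmsum : m.sum = n := by
    rw [List.Perm.sum_eq hperm, hl₀, sum_filter_ofFn, hνsum]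
  have hmult : Multiset.map ν (Finset.univ.filter (fun i => ν i ≠ 0)).val = (↑m : Multiset ℕ) := by
    rw [Multiset.coe_eq_coe.2 hperm, hl₀, multiset_filter_ofFn]
  obtain ⟨e, he⟩ := exists_equiv_of_map_eq hmult
  have hν0 : ∀ i : Fin n, lam.length ≤ (i : ℕ) → ν i = 0 := by
    intro i hi
    show lam.getD (i : ℕ) 0 + ((σ i : ℕ)) - (i : ℕ) = 0
    rw [List.getD_eq_default _ _ hi, hfix i hi]
    omega
  -- restriction equivalence
  have hμcast : ∀ (x : Fin n) (hx : (x : ℕ) < lam.length), μ ⟨(x : ℕ), hx⟩ = ν x := by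
    intro x hx
    rw [hμν]
    rfl
  let E : {x : Fin n // x ∈ Finset.univ.filter (fun i => ν i ≠ 0)} ≃
      {j : Fin lam.length // μ j ≠ 0} :=
    { toFun := fun x => ⟨⟨(x : Fin n), by
        by_contra hx
        exact (Finset.mem_filter.1 x.2).2 (hν0 x (le_of_not_gt hx))⟩,
        fun h0 => (Finset.mem_filter.1 x.2).2 ((hμcast _ _).symm.trans h0)⟩
      invFun := fun j => ⟨Fin.castLE hln j, Finset.mem_filter.2 ⟨Finset.mem_univ _,
        fun h0 => j.2 ((congrFun hμν ↑j).trans h0)⟩⟩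
      left_inv := fun x => Subtype.ext (Fin.ext rfl)
      right_inv := fun j => Subtype.ext (Fin.ext rfl) }
  have he' : ∀ j, μ ((e.trans E) j : Fin lam.length) = m.get j := by
    intro j
    rw [Equiv.trans_apply]
    have : μ (E (e j)) = ν (e j) := hμcast _ _
    rw [this, he j]
  rw [zeta_eq w m hmsum,
    ← count_congr (fun c : {c // c ∈ cyclesOf w} => (c : Finset (Fin n)).card)
      (fun c => card_pos_of_mem_cyclesOf_s11 c.2) μ m (e.trans E) he']

lemma prod_X_pow_eq_monomial' {ℓ : ℕ} (g : Fin ℓ → ℕ) :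
    (∏ i : Fin ℓ, (X i : MvPolynomial (Fin ℓ) ℤ) ^ g i) =
      monomial (Finsupp.equivFunOnFinite.symm g) 1 := by
  rw [prod_X_pow_single Finset.univ (fun i => i) g, sum_single_univ]

theorem stmt11 (n : ℕ) (lam : List ℕ) (hsort : lam.Pairwise (· ≥ ·))
    (hpos : ∀ p ∈ lam, 0 < p) (hsum : lam.sum = n) (w : Equiv.Perm (Fin n)) :
    chiFrob w lam =
      ∑ σ ∈ Finset.univ.filter (fun σ : Equiv.Perm (Fin n) =>
          (∀ i : Fin n, lam.length ≤ (i : ℕ) → σ i = i) ∧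
          ∀ i : Fin n, (i : ℕ) < lam.length → (i : ℕ) ≤ lam.getD (i : ℕ) 0 + ((σ i : ℕ))),
        (Equiv.Perm.sign σ : ℤ) *
          zeta w (List.insertionSort (· ≥ ·)
            ((List.ofFn fun i : Fin n =>
              lam.getD (i : ℕ) 0 + ((σ i : ℕ)) - (i : ℕ)).filter fun a => a ≠ 0)) := by
  classical
  have hln : lam.length ≤ n := by
    rw [← hsum]
    clear hsum hsort
    induction lam with
    | nil => simp
    | cons x t ih =>
        simp only [List.length_cons, List.sum_cons]
        have hx := hpos x (by simp)
        have ht := ih (fun p hp => hpos p (List.mem_cons_of_mem _ hp))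
        omega
  let femb : Fin lam.length ≃ {i : Fin n // (i : ℕ) < lam.length} :=
    { toFun := fun j => ⟨⟨(j : ℕ), lt_of_lt_of_le j.isLt hln⟩, j.isLt⟩
      invFun := fun x => ⟨((x : Fin n) : ℕ), x.2⟩
      left_inv := fun j => rfl
      right_inv := fun x => Subtype.ext (Fin.ext rfl) }
  -- facts about extendDomain
  have hfix_ext : ∀ (τ : Equiv.Perm (Fin lam.length)) (i : Fin n), lam.length ≤ (i : ℕ) →
      (τ.extendDomain femb) i = i := fun τ i hi =>
    Equiv.Perm.extendDomain_apply_not_subtype τ femb (by omega)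
  have hval_ext : ∀ (τ : Equiv.Perm (Fin lam.length)) (i : Fin n) (hi : (i : ℕ) < lam.length),
      ((τ.extendDomain femb) i : ℕ) = (τ ⟨(i : ℕ), hi⟩ : ℕ) := by
    intro τ i hi
    rw [Equiv.Perm.extendDomain_apply_subtype τ femb hi]
    rfl
  unfold chiFrob
  rw [vandermonde_expand, Finset.sum_mul, MvPolynomial.coeff_sum]
  simp only [smul_mul_assoc, MvPolynomial.coeff_smul, smul_eq_mul]
  set d : Fin lam.length →₀ ℕ := Finsupp.equivFunOnFinite.symm fun i : Fin lam.length =>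
      lam.get i + (lam.length - 1 - (i : ℕ)) with hd
  set P : MvPolynomial (Fin lam.length) ℤ := ∏ c ∈ cyclesOf w, ∑ i : Fin lam.length,
      (MvPolynomial.X i : MvPolynomial (Fin lam.length) ℤ) ^ c.card with hP
  have hkey : ∀ τ : Equiv.Perm (Fin lam.length),
      MvPolynomial.coeff d ((∏ i : Fin lam.length,
          (X i : MvPolynomial (Fin lam.length) ℤ) ^ (lam.length - 1 - (τ i : ℕ))) * P) =
      if (∀ i : Fin lam.length, (i : ℕ) ≤ lam.get i + (τ i : ℕ))
        then (zeta w (List.insertionSort (· ≥ ·) ((List.ofFn fun i : Fin n =>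
          lam.getD (i : ℕ) 0 + (((τ.extendDomain femb) i : ℕ)) - (i : ℕ)).filter
            fun a => a ≠ 0)) : ℤ)
        else 0 := by
    intro τ
    rw [prod_X_pow_eq_monomial', MvPolynomial.coeff_monomial_mul', one_mul]
    have hiff : (Finsupp.equivFunOnFinite.symm (fun i : Fin lam.length =>
        lam.length - 1 - (τ i : ℕ)) ≤ d) ↔
        (∀ i : Fin lam.length, (i : ℕ) ≤ lam.get i + (τ i : ℕ)) := by
      rw [Finsupp.le_def]
      apply forall_congr'
      intro i
      have h1 : (i : ℕ) < lam.length := i.isLt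
      have h2 : (τ i : ℕ) < lam.length := (τ i).isLt
      show lam.length - 1 - (τ i : ℕ) ≤ lam.get i + (lam.length - 1 - (i : ℕ)) ↔ _
      omega
    rw [if_congr hiff rfl rfl]
    by_cases hc : (∀ i : Fin lam.length, (i : ℕ) ≤ lam.get i + (τ i : ℕ))
    · rw [if_pos hc, if_pos hc]
      have hcondσ : ∀ i : Fin n, (i : ℕ) < lam.length →
          (i : ℕ) ≤ lam.getD (i : ℕ) 0 + ((τ.extendDomain femb) i : ℕ) := by
        intro i hi
        rw [hval_ext τ i hi, List.getD_eq_getElem _ _ hi]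
        have := hc ⟨(i : ℕ), hi⟩
        rw [List.get_eq_getElem] at this
        exact this
      have hsub : d - (Finsupp.equivFunOnFinite.symm fun i : Fin lam.length =>
          lam.length - 1 - (τ i : ℕ)) =
          Finsupp.equivFunOnFinite.symm (fun j : Fin lam.length =>
            lam.getD (j : ℕ) 0 + (((τ.extendDomain femb) (Fin.castLE hln j) : ℕ)) - (j : ℕ)) := by
        ext j
        rw [Finsupp.tsub_apply]
        show (lam.get j + (lam.length - 1 - (j : ℕ))) - (lam.length - 1 - (τ j : ℕ)) =
          lam.getD (j : ℕ) 0 + (((τ.extendDomain femb) (Fin.castLE hln j) : ℕ)) - (j : ℕ)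
        rw [hval_ext τ (Fin.castLE hln j) j.isLt, List.getD_eq_getElem _ _ j.isLt]
        have h1 : (j : ℕ) < lam.length := j.isLt
        have h2 : (τ j : ℕ) < lam.length := (τ j).isLt
        have h3 := hc j
        rw [List.get_eq_getElem] at h3
        rw [List.get_eq_getElem]
        have hjj : τ ⟨((Fin.castLE hln j : Fin n) : ℕ), j.isLt⟩ = τ j := rfl
        rw [hjj]
        omega
      rw [hsub, hP, ← Finset.prod_coe_sort (cyclesOf w)]
      rw [coeff_count (fun c : {c // c ∈ cyclesOf w} => (c : Finset (Fin n)).card)]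
      have := key_zeta w lam hsum hln (τ.extendDomain femb) (hfix_ext τ) hcondσ
        (fun j : Fin lam.length =>
          lam.getD (j : ℕ) 0 + (((τ.extendDomain femb) (Fin.castLE hln j) : ℕ)) - (j : ℕ))
        (fun j => rfl)
      exact_mod_cast this.symm
    · rw [if_neg hc, if_neg hc]
  rw [Finset.sum_congr rfl (fun τ _ => by rw [hkey τ])]
  simp only [mul_ite, mul_zero]
  rw [← Finset.sum_filter]
  -- the bijection
  refine Finset.sum_nbij' (fun τ => τ.extendDomain femb)
    (fun σ => if h : (∀ x : Fin n, ((x : ℕ) < lam.length ↔ ((σ x : ℕ) < lam.length)))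
      then (femb.symm).permCongr (σ.subtypePerm (fun x => (h x).symm)) else 1) ?_ ?_ ?_ ?_ ?_
  · -- maps into RHS filter
    intro τ hτ
    rw [Finset.mem_filter] at hτ ⊢
    refine ⟨Finset.mem_univ _, hfix_ext τ, ?_⟩
    intro i hi
    rw [hval_ext τ i hi, List.getD_eq_getElem _ _ hi]
    have := hτ.2 ⟨(i : ℕ), hi⟩
    rw [List.get_eq_getElem] at this
    exact this
  · -- maps back into LHS filter
    intro σ hσ
    rw [Finset.mem_filter] at hσ ⊢
    obtain ⟨-, hA, hB⟩ := hσ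
    have hpres : ∀ x : Fin n, ((x : ℕ) < lam.length ↔ ((σ x : ℕ) < lam.length)) := by
      intro x
      constructor
      · intro hx
        by_contra hge
        have h2 : σ (σ x) = σ x := hA (σ x) (le_of_not_gt hge)
        have h3 := σ.injective h2
        rw [h3] at hge
        omega
      · intro hx
        by_contra hge
        rw [hA x (le_of_not_gt hge)] at hx
        omega
    refine ⟨Finset.mem_univ _, ?_⟩
    intro j
    simp only [dif_pos hpres]
    have hv : (((femb.symm).permCongr (σ.subtypePerm (fun x => (hpres x).symm))) j : ℕ) =
        (σ ⟨(j : ℕ), lt_of_lt_of_le j.isLt hln⟩ : ℕ) := rfl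
    rw [hv]
    have := hB ⟨(j : ℕ), lt_of_lt_of_le j.isLt hln⟩ j.isLt
    rw [List.getD_eq_getElem _ _ (show ((⟨(j : ℕ), lt_of_lt_of_le j.isLt hln⟩ : Fin n) : ℕ) < lam.length from j.isLt)] at this
    rw [List.get_eq_getElem]
    exact this
  · -- left inverse
    intro τ hτ
    have hpres : ∀ x : Fin n, ((x : ℕ) < lam.length ↔
        (((τ.extendDomain femb) x : ℕ) < lam.length)) := by
      intro x
      constructor
      · intro hx
        rw [hval_ext τ x hx]
        exact (τ ⟨(x : ℕ), hx⟩).isLt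
      · intro hx
        by_contra hge
        rw [hfix_ext τ x (le_of_not_gt hge)] at hx
        omega
    simp only [dif_pos hpres]
    apply Equiv.ext
    intro j
    apply Fin.ext
    show (((τ.extendDomain femb) ((femb j : {i : Fin n // (i : ℕ) < lam.length}) : Fin n)) : ℕ) =
      (τ j : ℕ)
    rw [Equiv.Perm.extendDomain_apply_image τ femb j]
    rfl
  · -- right inverse
    intro σ hσ
    rw [Finset.mem_filter] at hσ
    obtain ⟨-, hA, hB⟩ := hσ
    have hpres : ∀ x : Fin n, ((x : ℕ) < lam.length ↔ ((σ x : ℕ) < lam.length)) := by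
      intro x
      constructor
      · intro hx
        by_contra hge
        have h2 : σ (σ x) = σ x := hA (σ x) (le_of_not_gt hge)
        have h3 := σ.injective h2
        rw [h3] at hge
        omega
      · intro hx
        by_contra hge
        rw [hA x (le_of_not_gt hge)] at hx
        omega
    simp only [dif_pos hpres]
    apply Equiv.ext
    intro x
    by_cases hx : (x : ℕ) < lam.length
    · rw [Equiv.Perm.extendDomain_apply_subtype _ femb hx]
      rfl
    · rw [Equiv.Perm.extendDomain_apply_not_subtype _ femb hx]
      exact (hA x (le_of_not_gt hx)).symm
  · -- values agree
    intro τ hτ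
    rw [Equiv.Perm.sign_extendDomain]

end aux
end

section
/- Let j ≤ n be positive integers and w ∈ 𝔖_n. In the tiling poset Til(w; j), every interval of rank 2 contains exactly two intermediate elements: for all tilings A'' < A in Til(w; j) such that some A' satisfies A'' ⋖ A' ⋖ A, the number of A' with A'' ⋖ A' ⋖ A is exactly 2. Consequently, the 𝔽_2-linear map ∂ sending the basis vector e_A to Σ_{A' ⋖ A} e_{A'} satisfies ∂ ∘ ∂ = 0, so (C_•, ∂) is a chain complex over 𝔽_2. -/
open scoped Classical

/-- An element of the tiling poset `Til(w; j)`: an ordered brick tiling, by `w`,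
of some composition of `j`, encoded as the list of its rows (each row being the
set of cycles of `w` tiling it). -/
def IsTiling {n : ℕ} (w : Equiv.Perm (Fin n)) (j : ℕ)
    (L : List (Finset (Finset (Fin n)))) : Prop :=
  (∀ S ∈ L, ∀ c ∈ S, c ∈ cyclesOf w) ∧
  List.Pairwise Disjoint L ∧
  (∀ S ∈ L, 0 < S.sum Finset.card) ∧
  (L.map fun S => S.sum Finset.card).sum = j

/-- The covering relation of the tiling poset: `A` covers `A'` when `A` is obtained
from `A'` by merging two adjacent rows. -/
def TilCov {n : ℕ} (A' A : List (Finset (Finset (Fin n)))) : Prop :=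
  ∃ t : ℕ, t + 1 < A'.length ∧
    A = A'.take t ++ (A'.getD t ∅ ∪ A'.getD (t + 1) ∅) :: A'.drop (t + 2)

namespace TilAux

variable {n : ℕ}

def mergeAt (L : List (Finset (Finset (Fin n)))) (t : ℕ) : List (Finset (Finset (Fin n))) :=
  L.take t ++ (L.getD t ∅ ∪ L.getD (t + 1) ∅) :: L.drop (t + 2)

theorem tilCov_iff {A' A : List (Finset (Finset (Fin n)))} :
    TilCov A' A ↔ ∃ t, t + 1 < A'.length ∧ A = mergeAt A' t := Iff.rfl

theorem length_mergeAt {L : List (Finset (Finset (Fin n)))} {t : ℕ} (h : t + 1 < L.length) :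
    (mergeAt L t).length = L.length - 1 := by
  simp [mergeAt]; omega

theorem getD_mem {L : List (Finset (Finset (Fin n)))} {i : ℕ} (h : i < L.length) :
    L.getD i ∅ ∈ L := by
  rw [List.getD_eq_getElem _ _ h]; exact List.getElem_mem h

theorem getD_mergeAt {L : List (Finset (Finset (Fin n)))} {t : ℕ} (ht : t + 1 < L.length)
    (i : ℕ) :
    (mergeAt L t).getD i ∅ =
      if i < t then L.getD i ∅
      else if i = t then L.getD t ∅ ∪ L.getD (t + 1) ∅
      else L.getD (i + 1) ∅ := by
  have hmin : min t L.length = t := by omega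
  rcases lt_trichotomy i t with h | h | h
  · rw [if_pos h, List.getD_eq_getElem?_getD, List.getD_eq_getElem?_getD]
    simp only [mergeAt]
    rw [List.getElem?_append, List.length_take, hmin, if_pos h, List.getElem?_take, if_pos h]
  · rw [if_neg (by omega), if_pos h]
    subst h
    rw [List.getD_eq_getElem?_getD]
    simp only [mergeAt]
    rw [List.getElem?_append, List.length_take, hmin, if_neg (lt_irrefl i), Nat.sub_self,
      List.getElem?_cons_zero]
    rfl
  · rw [if_neg (by omega), if_neg (by omega), List.getD_eq_getElem?_getD,
      List.getD_eq_getElem?_getD]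
    simp only [mergeAt]
    rw [List.getElem?_append, List.length_take, hmin, if_neg (by omega)]
    rw [show i - t = (i - t - 1) + 1 by omega, List.getElem?_cons_succ, List.getElem?_drop,
      show t + 2 + (i - t - 1) = i + 1 by omega]

theorem eq_of_getD {l l' : List (Finset (Finset (Fin n)))} (hlen : l.length = l'.length)
    (h : ∀ i, l.getD i ∅ = l'.getD i ∅) : l = l' := by
  apply List.ext_getElem hlen
  intro i h1 h2
  have := h i
  rwa [List.getD_eq_getElem _ _ h1, List.getD_eq_getElem _ _ h2] at this

set_option maxHeartbeats 2000000 in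
theorem mergeAt_comm {L : List (Finset (Finset (Fin n)))} {t s : ℕ} (hts : t ≤ s)
    (hs : s + 2 < L.length) :
    mergeAt (mergeAt L (s + 1)) t = mergeAt (mergeAt L t) s := by
  have h1 : (s + 1) + 1 < L.length := by omega
  have h3 : t + 1 < L.length := by omega
  have h2 : t + 1 < (mergeAt L (s + 1)).length := by rw [length_mergeAt h1]; omega
  have h4 : s + 1 < (mergeAt L t).length := by rw [length_mergeAt h3]; omega
  apply eq_of_getD
  · rw [length_mergeAt h2, length_mergeAt h4, length_mergeAt h1, length_mergeAt h3]
  · intro i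
    simp only [getD_mergeAt h2, getD_mergeAt h4, getD_mergeAt h1, getD_mergeAt h3]
    split_ifs <;>
      first
        | rfl
        | (exfalso; omega)
        | (subst_vars; first | rfl | rw [Finset.union_assoc] | (rw [show t + 1 = s + 1 by omega]; rw [Finset.union_assoc]))


theorem row_nonempty {w : Equiv.Perm (Fin n)} {j : ℕ} {L : List (Finset (Finset (Fin n)))}
    (hL : IsTiling w j L) {i : ℕ} (hi : i < L.length) : (L.getD i ∅).Nonempty := by
  have := hL.2.2.1 _ (getD_mem hi)
  rcases Finset.eq_empty_or_nonempty (L.getD i ∅) with h | h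
  · rw [h] at this; simp at this
  · exact h

theorem row_disjoint {w : Equiv.Perm (Fin n)} {j : ℕ} {L : List (Finset (Finset (Fin n)))}
    (hL : IsTiling w j L) {a b : ℕ} (hab : a < b) (hb : b < L.length) :
    Disjoint (L.getD a ∅) (L.getD b ∅) := by
  have := List.pairwise_iff_getElem.mp hL.2.1 a b (lt_trans hab hb) hb hab
  rwa [List.getD_eq_getElem _ _ (lt_trans hab hb), List.getD_eq_getElem _ _ hb]

theorem isTiling_mergeAt {w : Equiv.Perm (Fin n)} {j : ℕ} {L : List (Finset (Finset (Fin n)))}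
    (hL : IsTiling w j L) {t : ℕ} (ht : t + 1 < L.length) : IsTiling w j (mergeAt L t) := by
  obtain ⟨h1, h2, h3, h4⟩ := hL
  have hd : Disjoint (L.getD t ∅) (L.getD (t + 1) ∅) :=
    row_disjoint ⟨h1, h2, h3, h4⟩ (Nat.lt_succ_self t) ht
  have hsu : (L.getD t ∅ ∪ L.getD (t + 1) ∅).sum Finset.card =
      (L.getD t ∅).sum Finset.card + (L.getD (t + 1) ∅).sum Finset.card :=
    Finset.sum_union hd
  have hlen := length_mergeAt ht
  refine ⟨?_, ?_, ?_, ?_⟩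
  · intro S hS c hc
    rcases List.mem_append.mp hS with hS | hS
    · exact h1 S (List.mem_of_mem_take hS) c hc
    · rcases List.mem_cons.mp hS with rfl | hS
      · rcases Finset.mem_union.mp hc with hc | hc
        · exact h1 _ (getD_mem (by omega)) c hc
        · exact h1 _ (getD_mem ht) c hc
      · exact h1 S (List.mem_of_mem_drop hS) c hc
  · rw [List.pairwise_iff_getElem]
    intro a b ha hb hab
    rw [← List.getD_eq_getElem _ ∅ ha, ← List.getD_eq_getElem _ ∅ hb,
      getD_mergeAt ht, getD_mergeAt ht]
    rw [hlen] at ha hb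
    split_ifs <;>
      first
        | (exfalso; omega)
        | exact row_disjoint ⟨h1, h2, h3, h4⟩ (by omega) (by omega)
        | (rw [Finset.disjoint_union_right];
            exact ⟨row_disjoint ⟨h1, h2, h3, h4⟩ (by omega) (by omega),
              row_disjoint ⟨h1, h2, h3, h4⟩ (by omega) (by omega)⟩)
        | (rw [Finset.disjoint_union_left];
            exact ⟨row_disjoint ⟨h1, h2, h3, h4⟩ (by omega) (by omega),
              row_disjoint ⟨h1, h2, h3, h4⟩ (by omega) (by omega)⟩)
  · intro S hS
    rcases List.mem_append.mp hS with hS | hS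
    · exact h3 S (List.mem_of_mem_take hS)
    · rcases List.mem_cons.mp hS with rfl | hS
      · rw [hsu]
        have := h3 _ (getD_mem (show t < L.length by omega))
        omega
      · exact h3 S (List.mem_of_mem_drop hS)
  · have e1 : L = L.take t ++ L.getD t ∅ :: L.getD (t + 1) ∅ :: L.drop (t + 2) := by
      conv_lhs => rw [← List.take_append_drop t L]
      congr 1
      rw [List.drop_eq_getElem_cons (show t < L.length by omega),
        List.drop_eq_getElem_cons (show t + 1 < L.length from ht),
        List.getD_eq_getElem _ _ (show t < L.length by omega),
        List.getD_eq_getElem _ _ ht]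
    rw [e1, List.map_append, List.sum_append, List.map_cons, List.map_cons, List.sum_cons,
      List.sum_cons] at h4
    simp only [mergeAt]
    rw [List.map_append, List.sum_append, List.map_cons, List.sum_cons, hsu]
    omega

set_option maxHeartbeats 2000000 in
theorem getD_mergeAt2 {L : List (Finset (Finset (Fin n)))} {u v : ℕ}
    (huv : u ≤ v) (hv : v + 2 < L.length) (i : ℕ) :
    (mergeAt (mergeAt L u) v).getD i ∅ =
      if i < u then L.getD i ∅
      else if i = u then
        (L.getD u ∅ ∪ L.getD (u + 1) ∅) ∪ (if u = v then L.getD (u + 2) ∅ else ∅)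
      else if i < v then L.getD (i + 1) ∅
      else if i = v then L.getD (v + 1) ∅ ∪ L.getD (v + 2) ∅
      else L.getD (i + 2) ∅ := by
  have hu : u + 1 < L.length := by omega
  have hv' : v + 1 < (mergeAt L u).length := by rw [length_mergeAt hu]; omega
  rw [getD_mergeAt hv']
  simp only [getD_mergeAt hu]
  split_ifs <;>
    first
      | rfl
      | (exfalso; omega)
      | (subst_vars; first | rfl | rw [Finset.union_empty] | rw [Finset.union_assoc])

theorem mergeAt_ne {w : Equiv.Perm (Fin n)} {j : ℕ} {L : List (Finset (Finset (Fin n)))}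
    (hL : IsTiling w j L) {u s : ℕ} (hus : u < s) (hs : s + 1 < L.length) :
    mergeAt L u ≠ mergeAt L s := by
  intro h
  have hE : (mergeAt L u).getD u ∅ = (mergeAt L s).getD u ∅ := by rw [h]
  rw [getD_mergeAt (by omega : u + 1 < L.length), getD_mergeAt hs, if_neg (lt_irrefl u),
    if_pos rfl, if_pos hus] at hE
  obtain ⟨x, hx⟩ := row_nonempty hL (show u + 1 < L.length by omega)
  have hxu : x ∈ L.getD u ∅ := by rw [← hE]; exact Finset.mem_union_right _ hx
  exact (Finset.disjoint_left.mp (row_disjoint hL (Nat.lt_succ_self u) (by omega)) hxu) hx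

theorem merge2_inj {w : Equiv.Perm (Fin n)} {j : ℕ} {L : List (Finset (Finset (Fin n)))}
    (hL : IsTiling w j L) {u v u' v' : ℕ}
    (huv : u ≤ v) (hv : v + 2 < L.length) (huv' : u' ≤ v') (hv' : v' + 2 < L.length)
    (heq : mergeAt (mergeAt L u) v = mergeAt (mergeAt L u') v') : u = u' ∧ v = v' := by
  have main : ∀ u v u' v' : ℕ, u ≤ v → v + 2 < L.length → u' ≤ v' → v' + 2 < L.length →
      mergeAt (mergeAt L u) v = mergeAt (mergeAt L u') v' → ¬ u' < u := by
    intro u v u' v' huv hv huv' hv' heq hlt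
    have hE : (mergeAt (mergeAt L u) v).getD u' ∅
        = (mergeAt (mergeAt L u') v').getD u' ∅ := by rw [heq]
    rw [getD_mergeAt2 huv hv, getD_mergeAt2 huv' hv'] at hE
    obtain ⟨x, hx⟩ := row_nonempty hL (show u' + 1 < L.length by omega)
    split_ifs at hE <;> try omega
    all_goals {
      have hxu : x ∈ L.getD u' ∅ := by
        rw [hE]; exact Finset.mem_union_left _ (Finset.mem_union_right _ hx)
      exact (Finset.disjoint_left.mp
        (row_disjoint hL (Nat.lt_succ_self u') (by omega)) hxu) hx }
  have hu : u = u' := le_antisymm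
    (not_lt.mp (main u v u' v' huv hv huv' hv' heq))
    (not_lt.mp (main u' v' u v huv' hv' huv hv heq.symm))
  subst hu
  refine ⟨rfl, ?_⟩
  have main2 : ∀ v v' : ℕ, u ≤ v → v + 2 < L.length → u ≤ v' → v' + 2 < L.length →
      mergeAt (mergeAt L u) v = mergeAt (mergeAt L u) v' → ¬ v < v' := by
    intro v v' h1 h2 h3 h4 heq hlt
    rcases h1.lt_or_eq with hlt1 | hequ
    · -- u < v
      have hE : (mergeAt (mergeAt L u) v).getD v ∅
          = (mergeAt (mergeAt L u) v').getD v ∅ := by rw [heq]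
      rw [getD_mergeAt2 h1 h2, getD_mergeAt2 h3 h4] at hE
      obtain ⟨x, hx⟩ := row_nonempty hL (show v + 2 < L.length from h2)
      split_ifs at hE <;> try omega
      all_goals {
        have hxu : x ∈ L.getD (v + 1) ∅ := by
          rw [← hE]; exact Finset.mem_union_right _ hx
        exact (Finset.disjoint_left.mp
          (row_disjoint hL (Nat.lt_succ_self (v + 1)) (by omega)) hxu) hx }
    · -- u = v
      subst hequ
      have hE : (mergeAt (mergeAt L u) u).getD u ∅
          = (mergeAt (mergeAt L u) v').getD u ∅ := by rw [heq]
      rw [getD_mergeAt2 h1 h2, getD_mergeAt2 h3 h4] at hE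
      obtain ⟨x, hx⟩ := row_nonempty hL (show u + 2 < L.length from h2)
      split_ifs at hE <;> try omega
      all_goals {
        have hxm : x ∈ (L.getD u ∅ ∪ L.getD (u + 1) ∅) ∪ (∅ : Finset (Finset (Fin n))) := by
          rw [← hE]
          exact Finset.mem_union_right _ hx
        rw [Finset.union_empty, Finset.mem_union] at hxm
        rcases hxm with hxm | hxm
        · exact (Finset.disjoint_left.mp
            (row_disjoint hL (show u < u + 2 by omega) (by omega)) hxm) hx
        · exact (Finset.disjoint_left.mp
            (row_disjoint hL (show u + 1 < u + 2 by omega) (by omega)) hxm) hx }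
  exact le_antisymm (not_lt.mp (main2 v' v huv' hv' huv hv heq.symm))
    (not_lt.mp (main2 v v' huv hv huv' hv' heq))

theorem key {w : Equiv.Perm (Fin n)} {j : ℕ} (A'' A : List (Finset (Finset (Fin n))))
    (hA'' : IsTiling w j A'') (hA : IsTiling w j A)
    (hex : ∃ A', IsTiling w j A' ∧ TilCov A'' A' ∧ TilCov A' A) :
    Nat.card {A' : List (Finset (Finset (Fin n))) //
      IsTiling w j A' ∧ TilCov A'' A' ∧ TilCov A' A} = 2 := by
  obtain ⟨u, v, huv, hv, hAeq⟩ : ∃ u v, u ≤ v ∧ v + 2 < A''.length ∧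
      A = mergeAt (mergeAt A'' u) v := by
    obtain ⟨A', hA', hc1, hc2⟩ := hex
    rw [tilCov_iff] at hc1 hc2
    obtain ⟨s, hs, rfl⟩ := hc1
    obtain ⟨t, ht, hA2⟩ := hc2
    rw [length_mergeAt hs] at ht
    rcases le_or_gt s t with h | h
    · exact ⟨s, t, h, by omega, hA2⟩
    · refine ⟨t, s - 1, by omega, by omega, ?_⟩
      have hc := mergeAt_comm (show t ≤ s - 1 by omega)
        (show s - 1 + 2 < A''.length by omega)
      rw [show s - 1 + 1 = s by omega] at hc
      rw [hA2, ← hc]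
  have hu1 : u + 1 < A''.length := by omega
  have hv1 : (v + 1) + 1 < A''.length := by omega
  have hB1cov : TilCov A'' (mergeAt A'' u) := ⟨u, hu1, rfl⟩
  have hB1cov2 : TilCov (mergeAt A'' u) A :=
    ⟨v, by rw [length_mergeAt hu1]; omega, hAeq⟩
  have hB2cov : TilCov A'' (mergeAt A'' (v + 1)) := ⟨v + 1, hv1, rfl⟩
  have hcomm := mergeAt_comm huv hv
  have hB2cov2 : TilCov (mergeAt A'' (v + 1)) A :=
    ⟨u, by rw [length_mergeAt hv1]; omega, hAeq.trans hcomm.symm⟩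
  have hB1 : IsTiling w j (mergeAt A'' u) := isTiling_mergeAt hA'' hu1
  have hB2 : IsTiling w j (mergeAt A'' (v + 1)) := isTiling_mergeAt hA'' hv1
  have hne : mergeAt A'' u ≠ mergeAt A'' (v + 1) := mergeAt_ne hA'' (by omega) hv1
  have hset : ∀ X, (IsTiling w j X ∧ TilCov A'' X ∧ TilCov X A) ↔
      X ∈ ({mergeAt A'' u, mergeAt A'' (v + 1)} : Set (List (Finset (Finset (Fin n))))) := by
    intro X
    simp only [Set.mem_insert_iff, Set.mem_singleton_iff]
    constructor
    · rintro ⟨hX, hc1, hc2⟩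
      rw [tilCov_iff] at hc1 hc2
      obtain ⟨s, hs, rfl⟩ := hc1
      obtain ⟨t, ht, hA2⟩ := hc2
      rw [length_mergeAt hs] at ht
      rcases le_or_gt s t with h | h
      · obtain ⟨h1, h2⟩ := merge2_inj hA'' h (by omega) huv hv (hA2.symm.trans hAeq)
        left; rw [h1]
      · have hc := mergeAt_comm (show t ≤ s - 1 by omega)
          (show s - 1 + 2 < A''.length by omega)
        rw [show s - 1 + 1 = s by omega] at hc
        obtain ⟨h1, h2⟩ := merge2_inj hA'' (show t ≤ s - 1 by omega) (by omega) huv hv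
          (hc.symm.trans (hA2.symm.trans hAeq))
        right; rw [show s = v + 1 by omega]
    · rintro (rfl | rfl)
      exacts [⟨hB1, hB1cov, hB1cov2⟩, ⟨hB2, hB2cov, hB2cov2⟩]
  exact (Nat.card_congr (Equiv.subtypeEquivRight hset)).trans
    ((Nat.card_coe_set_eq _).trans (Set.ncard_pair hne))

end TilAux

theorem stmt17 (n j : ℕ) (hj : 0 < j) (hjn : j ≤ n) (w : Equiv.Perm (Fin n)) :
    (∀ A'' A : List (Finset (Finset (Fin n))),
        IsTiling w j A'' → IsTiling w j A →
        (∃ A', IsTiling w j A' ∧ TilCov A'' A' ∧ TilCov A' A) →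
        Nat.card {A' : List (Finset (Finset (Fin n))) //
          IsTiling w j A' ∧ TilCov A'' A' ∧ TilCov A' A} = 2) ∧
      ∀ D : (List (Finset (Finset (Fin n))) →₀ ZMod 2) →ₗ[ZMod 2]
          (List (Finset (Finset (Fin n))) →₀ ZMod 2),
        (∀ A, IsTiling w j A → ∀ A',
          D (Finsupp.single A 1) A' = if IsTiling w j A' ∧ TilCov A' A then 1 else 0) →
        ∀ A, IsTiling w j A → D (D (Finsupp.single A 1)) = 0 := by
  refine ⟨fun A'' A hA'' hA hex => TilAux.key A'' A hA'' hA hex, ?_⟩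
  intro D hD A hA
  set f : List (Finset (Finset (Fin n))) →₀ ZMod 2 := D (Finsupp.single A 1) with hfdef
  have hf : ∀ A', f A' = if IsTiling w j A' ∧ TilCov A' A then 1 else 0 := hD A hA
  have hsupp : ∀ a, f a ≠ 0 ↔ (IsTiling w j a ∧ TilCov a A) := by
    intro a
    rw [hf a]
    split_ifs with h
    · simpa using h
    · simpa using h
  ext A''
  rw [Finsupp.coe_zero, Pi.zero_apply]
  have h1 : D f = f.sum fun a b => D (Finsupp.single a b) := by
    conv_lhs => rw [← Finsupp.sum_single f]
    exact map_finsuppSum D f _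
  rw [h1, Finsupp.sum_apply, Finsupp.sum]
  have hterm : ∀ a ∈ f.support, (D (Finsupp.single a (f a))) A''
      = if IsTiling w j A'' ∧ TilCov A'' a then 1 else 0 := by
    intro a ha
    have hane : f a ≠ 0 := Finsupp.mem_support_iff.mp ha
    obtain ⟨hat, hac⟩ := (hsupp a).mp hane
    have : f a = 1 := by rw [hf a, if_pos ⟨hat, hac⟩]
    rw [this]
    exact hD a hat A''
  rw [Finset.sum_congr rfl hterm, Finset.sum_boole]
  by_cases hA'' : IsTiling w j A''
  · have hmem : ∀ a, a ∈ f.support.filter (fun a => IsTiling w j A'' ∧ TilCov A'' a) ↔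
        (IsTiling w j a ∧ TilCov A'' a ∧ TilCov a A) := by
      intro a
      rw [Finset.mem_filter, Finsupp.mem_support_iff]
      constructor
      · rintro ⟨h1, h2, h3⟩
        obtain ⟨hat, hac⟩ := (hsupp a).mp h1
        exact ⟨hat, h3, hac⟩
      · rintro ⟨h1, h2, h3⟩
        exact ⟨(hsupp a).mpr ⟨h1, h3⟩, hA'', h2⟩
    by_cases hex : ∃ A', IsTiling w j A' ∧ TilCov A'' A' ∧ TilCov A' A
    · have hcard : (f.support.filter (fun a => IsTiling w j A'' ∧ TilCov A'' a)).card
          = Nat.card {A' : List (Finset (Finset (Fin n))) //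
            IsTiling w j A' ∧ TilCov A'' A' ∧ TilCov A' A} := by
        rw [← Nat.card_eq_finsetCard]
        exact Nat.card_congr (Equiv.subtypeEquivRight hmem)
      rw [hcard, TilAux.key A'' A hA'' hA hex]
      decide
    · have : f.support.filter (fun a => IsTiling w j A'' ∧ TilCov A'' a) = ∅ := by
        refine Finset.eq_empty_of_forall_notMem fun a ha => ?_
        obtain ⟨h1, h2, h3⟩ := (hmem a).mp ha
        exact hex ⟨a, h1, h2, h3⟩
      simp [this]
  · have : f.support.filter (fun a => IsTiling w j A'' ∧ TilCov A'' a) = ∅ := by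
      refine Finset.eq_empty_of_forall_notMem fun a ha => ?_
      exact hA'' (Finset.mem_filter.mp ha).2.1
    simp [this]
end
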